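/- Let T > 0, let g ∈ L²(AddCircle T; ℂ), and let A : ℕ+ → ℂ be a sequence with Σₙ |Aₙ| < ∞. Then the series Σₙ Aₙ gₙ (where gₙ is the n-th dilation of g) converges in L²(AddCircle T) to a function F, and for every integer k the k-th Fourier coefficient of F equals Σ over those n ∈ ℕ+ with n ∣ k of Aₙ · ĝ(k/n). -/

import Mathlib

open MeasureTheory Filter
open scoped ENNReal

section DilationHelpers

open AddCircle

variable {T : ℝ} [hT : Fact (0 < T)]

private lemma mp_nsmul (n : ℕ+) :
    MeasurePreserving (fun x : AddCircle T => (n : ℕ) • x) haarAddCircle haarAddCircle := by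
  have h := MeasureTheory.Measure.measurePreserving_zsmul
      (G := AddCircle T) haarAddCircle (n := ((n : ℕ) : ℤ))
      (by exact_mod_cast (n.ne_zero))
  simpa [natCast_zsmul] using h

omit hT in
private lemma fourier_nsmul' (m : ℤ) (n : ℕ) (x : AddCircle T) :
    fourier m ((n : ℕ) • x) = fourier ((n : ℤ) * m) x := by
  rw [fourier_apply, fourier_apply, ← natCast_zsmul x n, smul_smul, mul_comm]

private lemma fourierCoeff_congr_ae' {f₁ f₂ : AddCircle T → ℂ}
    (h : f₁ =ᵐ[haarAddCircle] f₂) (k : ℤ) : fourierCoeff f₁ k = fourierCoeff f₂ k :=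
  integral_congr_ae (h.mono fun x hx => by simp [hx])

/-- The dilation operator on `L²(AddCircle T)` as a linear isometry. -/
private noncomputable def dil (n : ℕ+) :
    Lp ℂ 2 (haarAddCircle (T := T)) →ₗᵢ[ℂ] Lp ℂ 2 (haarAddCircle (T := T)) :=
  Lp.compMeasurePreservingₗᵢ ℂ _ (mp_nsmul n)

private lemma coeFn_dil (n : ℕ+) (u : Lp ℂ 2 (haarAddCircle (T := T))) :
    dil n u =ᵐ[haarAddCircle] fun x => u ((n : ℕ) • x) :=
  Lp.coeFn_compMeasurePreserving u (mp_nsmul n)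

private lemma dil_fourierLp (n : ℕ+) (i : ℤ) :
    dil (T := T) n (fourierLp 2 i) = fourierLp 2 (((n : ℕ) : ℤ) * i) := by
  apply Lp.ext ?_
  refine (coeFn_dil n (fourierLp 2 i)).trans ?_ |>.trans (coeFn_fourierLp 2 _).symm
  have h1 : (fun x : AddCircle T => (fourierLp 2 i : AddCircle T → ℂ) ((n : ℕ) • x))
      =ᵐ[haarAddCircle] fun x => fourier i ((n : ℕ) • x) :=
    (mp_nsmul n).quasiMeasurePreserving.ae_eq_comp (coeFn_fourierLp 2 i)
  refine h1.trans (Filter.Eventually.of_forall fun x => ?_)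
  exact fourier_nsmul' i n x

/-- The Fourier coefficients of a dilation: `f̂ₙ(k) = f̂(k/n)` if `n ∣ k`, and `0` otherwise. -/
private lemma fourierCoeff_dilation (g : AddCircle T → ℂ) (hg : MemLp g 2 haarAddCircle)
    (n : ℕ+) (k : ℤ) :
    fourierCoeff (fun x : AddCircle T => g ((n : ℕ) • x)) k =
      if ((n : ℕ) : ℤ) ∣ k then fourierCoeff g (k / ((n : ℕ) : ℤ)) else 0 := by
  set u : Lp ℂ 2 (haarAddCircle (T := T)) := hg.toLp g with hu
  have hcu : ∀ i : ℤ, fourierCoeff (u : AddCircle T → ℂ) i = fourierCoeff g i :=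
    fun i => fourierCoeff_congr_ae' (MemLp.coeFn_toLp hg) i
  -- the dilated function agrees a.e. with `dil n u`
  have hae : (fun x : AddCircle T => g ((n : ℕ) • x))
      =ᵐ[haarAddCircle] (dil n u : AddCircle T → ℂ) := by
    refine ((mp_nsmul n).quasiMeasurePreserving.ae_eq_comp (MemLp.coeFn_toLp hg)).symm.trans
      (coeFn_dil n u).symm
  rw [fourierCoeff_congr_ae' hae k, ← fourierBasis_repr]
  -- expand u in the Fourier basis and apply `dil n`
  have h1 : HasSum (fun i : ℤ => fourierCoeff g i • fourierLp 2 i) u := by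
    have := hasSum_fourier_series_L2 u
    simpa only [hcu] using this
  have h2 : HasSum (fun i : ℤ => fourierCoeff g i • fourierLp 2 (((n : ℕ) : ℤ) * i))
      (dil n u) := by
    have := h1.mapL (dil (T := T) n).toContinuousLinearMap
    simpa only [LinearIsometry.coe_toContinuousLinearMap, _root_.map_smul, dil_fourierLp]
      using this
  -- take inner products with the k-th basis vector
  have h3 : HasSum
      (fun i : ℤ => fourierCoeff g i * (if k = ((n : ℕ) : ℤ) * i then 1 else 0))
      (fourierBasis.repr (dil n u) k) := by
    rw [fourierBasis.repr_apply_apply]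
    have := h2.mapL (innerSL ℂ (fourierBasis (T := T) k : Lp ℂ 2 (haarAddCircle (T := T))))
    refine (this.congr_fun fun i => ?_)
    have hb : (fourierBasis (T := T) k : Lp ℂ 2 (haarAddCircle (T := T))) = fourierLp 2 k :=
      congrFun coe_fourierBasis k
    rw [innerSL_apply_apply, inner_smul_right, hb,
      orthonormal_iff_ite.mp orthonormal_fourier k (((n : ℕ) : ℤ) * i)]
  rw [← h3.tsum_eq]
  have hn0 : ((n : ℕ) : ℤ) ≠ 0 := by exact_mod_cast n.ne_zero
  by_cases hd : ((n : ℕ) : ℤ) ∣ k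
  · obtain ⟨m, rfl⟩ := hd
    rw [if_pos ⟨m, rfl⟩, Int.mul_ediv_cancel_left m hn0]
    rw [tsum_eq_single m]
    · rw [if_pos rfl, mul_one]
    · intro i hi
      rw [if_neg fun h => hi (mul_left_cancel₀ hn0 h).symm, mul_zero]
  · rw [if_neg hd]
    have : ∀ i : ℤ, (fourierCoeff g i * if k = ((n : ℕ) : ℤ) * i then 1 else 0) = 0 := by
      intro i
      rw [if_neg fun h => hd ⟨i, h⟩, mul_zero]
    simp only [this, tsum_zero]

private lemma Lp_coeFn_sum {α E : Type*} [MeasurableSpace α] {μ : Measure α}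
    [NormedAddCommGroup E] {p : ℝ≥0∞} {ι : Type*} (s : Finset ι) (f : ι → Lp E p μ) :
    (((∑ i ∈ s, f i : Lp E p μ)) : α → E) =ᵐ[μ] fun x => ∑ i ∈ s, f i x := by
  classical
  induction s using Finset.induction_on with
  | empty =>
    simp only [Finset.sum_empty]
    exact Lp.coeFn_zero E p μ
  | insert a s hns ih =>
    rw [Finset.sum_insert hns]
    filter_upwards [Lp.coeFn_add (f a) (∑ i ∈ s, f i), ih] with x h1 h2
    rw [h1, Pi.add_apply, h2, Finset.sum_insert hns]

end DilationHelpers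

open AddCircle in
/-- For `g ∈ L²(AddCircle T; ℂ)` and an absolutely summable coefficient sequence
`A : ℕ+ → ℂ`, the series `∑ₙ Aₙ gₙ` of dilations `gₙ (x) = g (n • x)` converges in `L²`
to a function `F`, whose `k`-th Fourier coefficient is the Dirichlet-type sum
`∑_{n ∣ k} Aₙ ĝ(k/n)`. -/
theorem statement1 (T : ℝ) [hT : Fact (0 < T)] (g : AddCircle T → ℂ)
    (hg : MemLp g 2 AddCircle.haarAddCircle) (A : ℕ+ → ℂ)
    (hA : Summable fun n : ℕ+ => ‖A n‖) :
    ∃ F : AddCircle T → ℂ, MemLp F 2 AddCircle.haarAddCircle ∧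
      Tendsto (fun s : Finset ℕ+ =>
          eLpNorm (fun x : AddCircle T => (∑ n ∈ s, A n * g ((n : ℕ) • x)) - F x) 2
            AddCircle.haarAddCircle)
        atTop (nhds 0) ∧
      ∀ k : ℤ, fourierCoeff F k =
        ∑' n : ℕ+, if ((n : ℕ) : ℤ) ∣ k then A n * fourierCoeff g (k / ((n : ℕ) : ℤ)) else 0 := by
  classical
  set u : Lp ℂ 2 (haarAddCircle (T := T)) := hg.toLp g with hu
  set v : ℕ+ → Lp ℂ 2 (haarAddCircle (T := T)) := fun n => A n • dil n u with hv
  have hsum : Summable v := by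
    refine Summable.of_norm ?_
    have : (fun n : ℕ+ => ‖v n‖) = fun n : ℕ+ => ‖A n‖ * ‖u‖ := by
      funext n
      rw [hv, norm_smul, (dil (T := T) n).norm_map]
    rw [this]
    exact hA.mul_right ‖u‖
  obtain ⟨S, hS⟩ := hsum
  -- a.e. identification of `v n`
  have hvcoe : ∀ n : ℕ+,
      (v n : AddCircle T → ℂ) =ᵐ[haarAddCircle] fun x => A n * g ((n : ℕ) • x) := by
    intro n
    have h3 := (mp_nsmul (T := T) n).quasiMeasurePreserving.ae_eq_comp (MemLp.coeFn_toLp hg)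
    filter_upwards [Lp.coeFn_smul (A n) (dil n u), coeFn_dil n u, h3] with x h1 h2 h3'
    rw [hv]
    simp only [h1, Pi.smul_apply, h2, smul_eq_mul]
    exact congrArg (A n * ·) h3'
  refine ⟨(S : AddCircle T → ℂ), Lp.memLp S, ?_, ?_⟩
  · -- L² convergence of the partial sums
    have h1 : Tendsto (fun s : Finset ℕ+ => ∑ n ∈ s, v n - S) atTop (nhds 0) :=
      tendsto_sub_nhds_zero_iff.mpr hS
    have h2 : Tendsto (fun s : Finset ℕ+ => (‖∑ n ∈ s, v n - S‖₊ : ℝ≥0∞)) atTop (nhds 0) := by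
      rw [← ENNReal.coe_zero]
      exact ENNReal.tendsto_coe.mpr (by simpa using h1.nnnorm)
    refine h2.congr fun s => ?_
    have hae : ((∑ n ∈ s, v n - S : Lp ℂ 2 (haarAddCircle (T := T)))) =ᵐ[haarAddCircle]
        fun x : AddCircle T => (∑ n ∈ s, A n * g ((n : ℕ) • x)) - S x := by
      have hsm : (((∑ n ∈ s, v n : Lp ℂ 2 (haarAddCircle (T := T)))) : AddCircle T → ℂ)
          =ᵐ[haarAddCircle] fun x => ∑ n ∈ s, A n * g ((n : ℕ) • x) := by
        refine (Lp_coeFn_sum s v).trans ?_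
        have : ∀ᵐ x ∂(haarAddCircle (T := T)), ∀ n ∈ s, (v n : AddCircle T → ℂ) x
            = A n * g ((n : ℕ) • x) :=
          (ae_ball_iff s.countable_toSet).mpr fun n _ => hvcoe n
        filter_upwards [this] with x hx
        exact Finset.sum_congr rfl fun n hn => hx n hn
      filter_upwards [Lp.coeFn_sub (∑ n ∈ s, v n) S, hsm] with x h1' h2'
      rw [h1', Pi.sub_apply, h2']
    rw [← eLpNorm_congr_ae hae, Lp.nnnorm_def,
      ENNReal.coe_toNNReal (Lp.eLpNorm_ne_top _)]
  · -- Fourier coefficients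
    intro k
    have hrepr : fourierCoeff ((S : AddCircle T → ℂ)) k = fourierBasis.repr S k :=
      (fourierBasis_repr S k).symm
    rw [hrepr, fourierBasis.repr_apply_apply]
    have h4 := hS.mapL (innerSL ℂ (fourierBasis (T := T) k : Lp ℂ 2 (haarAddCircle (T := T))))
    have h4' : HasSum
        (fun n : ℕ+ => if ((n : ℕ) : ℤ) ∣ k then A n * fourierCoeff g (k / ((n : ℕ) : ℤ)) else 0)
        ((innerSL ℂ (fourierBasis (T := T) k : Lp ℂ 2 (haarAddCircle (T := T)))) S) := by
      refine h4.congr_fun fun n => ?_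
      have hterm : (innerSL ℂ (fourierBasis (T := T) k : Lp ℂ 2 (haarAddCircle (T := T)))) (v n)
          = A n * fourierCoeff (fun x : AddCircle T => g ((n : ℕ) • x)) k := by
        rw [hv]
        simp only [innerSL_apply_apply, inner_smul_right]
        congr 1
        rw [← fourierBasis.repr_apply_apply, fourierBasis_repr]
        refine fourierCoeff_congr_ae' ?_ k
        refine (coeFn_dil n u).trans ?_
        exact (mp_nsmul (T := T) n).quasiMeasurePreserving.ae_eq_comp (MemLp.coeFn_toLp hg)
      rw [hterm, fourierCoeff_dilation g hg n k]
      by_cases hd : ((n : ℕ) : ℤ) ∣ k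
      · rw [if_pos hd, if_pos hd]
      · rw [if_neg hd, if_neg hd, mul_zero]
    exact h4'.tsum_eq.symm
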